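/- A tournament on at least two vertices is strongly connected if and only if it contains a Hamiltonian cycle (Camion's theorem). -/

import Mathlib

/-- A tournament on `V`: no loops and for each pair of distinct vertices
exactly one of the two oriented edges is present. -/
def IsTournament {V : Type*} (r : V → V → Prop) : Prop :=
  (∀ i, ¬ r i i) ∧ ∀ i j, i ≠ j → (r i j ↔ ¬ r j i)

section Camion

variable {V : Type*} {r : V → V → Prop}

private lemma tour_asymm (h : IsTournament r) {a b : V} (hab : r a b) (hba : r b a) : False := by
  by_cases e : a = b
  · exact h.1 a (e ▸ hab)
  · exact ((h.2 a b e).1 hab) hba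

private lemma tour_ne (h : IsTournament r) {a b : V} (hab : r a b) : a ≠ b := by
  rintro rfl; exact h.1 a hab

private lemma tour_total (h : IsTournament r) {a b : V} (hne : a ≠ b) (hnab : ¬ r a b) :
    r b a := by
  by_contra hnba
  exact hnab ((h.2 a b hne).2 hnba)

private lemma closed_set (S : Set V) (hS : ∀ a b, a ∈ S → r a b → b ∈ S)
    {x y : V} (hxy : Relation.ReflTransGen r x y) (hx : x ∈ S) : y ∈ S := by
  induction hxy with
  | refl => exact hx
  | tail _ hr ih => exact hS _ _ ih hr

private lemma chain_reach : ∀ (l : List V) (a : V), List.Chain r a l →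
    ∀ x ∈ l, Relation.ReflTransGen r a x := by
  intro l
  induction l with
  | nil => intro a _ x hx; simp at hx
  | cons b t ih =>
    intro a hc x hx
    rcases List.chain_cons.1 hc with ⟨hab, hbt⟩
    rcases List.mem_cons.1 hx with rfl | hx
    · exact Relation.ReflTransGen.single hab
    · exact (Relation.ReflTransGen.single hab).trans (ih b hbt x hx)

private lemma reach_getLast : ∀ (l : List V) (hl : l ≠ []), List.Chain' r l →
    ∀ x ∈ l, Relation.ReflTransGen r x (l.getLast hl) := by
  intro l
  induction l with
  | nil => intro hl; exact absurd rfl hl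
  | cons a t ih =>
    intro hl hc x hx
    rcases t with _ | ⟨b, t'⟩
    · rcases List.mem_singleton.1 hx with rfl
      simpa using Relation.ReflTransGen.refl
    · have ht : (b :: t') ≠ [] := by simp
      have hc' : List.Chain r a (b :: t') := hc
      rw [List.getLast_cons ht]
      rcases List.chain_cons.1 hc' with ⟨hab, hbt⟩
      rcases List.mem_cons.1 hx with rfl | hx
      · exact (Relation.ReflTransGen.single hab).trans (ih ht hbt b (by simp))
      · exact ih ht hbt x hx

/-- Cycle predicate. -/
def IsCyc (r : V → V → Prop) (l : List V) : Prop :=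
  ∃ h : l ≠ [], l.Nodup ∧ l.Chain' r ∧ r (l.getLast h) (l.head h)

private lemma cyc_rot1 {x : V} {t : List V} (hcyc : IsCyc r (x :: t)) (ht : t ≠ []) :
    IsCyc r (t ++ [x]) := by
  obtain ⟨hne, hnd, hch, hedge⟩ := hcyc
  refine ⟨by simp, ?_, ?_, ?_⟩
  · exact (List.perm_append_singleton x t).nodup_iff.2 hnd
  · simp only [List.Chain', List.isChain_append]
    refine ⟨(List.isChain_cons.1 hch).2, List.isChain_singleton x, ?_⟩
    intro a ha b hb
    simp only [List.head?_cons, Option.mem_def, Option.some_inj] at hb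
    subst hb
    rw [List.getLast?_eq_getLast ht, Option.mem_def, Option.some_inj] at ha
    subst ha
    have hx : (x :: t).getLast hne = t.getLast ht := List.getLast_cons ht
    rw [hx] at hedge
    exact hedge
  · have h1 : (t ++ [x]).getLast (by simp) = x := by
      rw [List.getLast_append]; simp
    have h2 : (t ++ [x]).head (by simp) = t.head ht := by
      rcases t with _ | ⟨b, t'⟩
      · exact absurd rfl ht
      · rfl
    rw [h1, h2]
    rcases t with _ | ⟨b, t'⟩
    · exact absurd rfl ht
    · exact (List.isChain_cons_cons.1 hch).1

private lemma cyc_rot : ∀ (l₁ : List V) (a : V) (l₂ : List V),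
    IsCyc r (l₁ ++ a :: l₂) → IsCyc r (a :: (l₂ ++ l₁)) := by
  intro l₁
  induction l₁ with
  | nil => intro a l₂ hc; simpa using hc
  | cons x t ih =>
    intro a l₂ hc
    have ht : t ++ a :: l₂ ≠ [] := by simp
    have h1 := cyc_rot1 (x := x) (t := t ++ a :: l₂) (by simpa using hc) ht
    have h2 : t ++ a :: l₂ ++ [x] = t ++ a :: (l₂ ++ [x]) := by simp
    rw [h2] at h1
    have h3 := ih a (l₂ ++ [x]) h1
    simpa using h3

/-- The scan lemma. -/
private lemma scan (h : IsTournament r) (v : V) :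
    ∀ (m : List V) (a : V), List.Chain r a m → v ∉ m → v ≠ a → r a v → (a :: m).Nodup →
    (∀ z ∈ m, r z v) ∨
      ∃ m', List.Chain r a m' ∧
        (a :: m').getLast? = (a :: m).getLast? ∧
        m'.length = m.length + 1 ∧ (∀ z, z ∈ m' ↔ z ∈ m ∨ z = v) ∧ (a :: m').Nodup := by
  intro m
  induction m with
  | nil => intro a _ _ _ _ _; left; simp
  | cons b t ih =>
    intro a hch hvm hva hav hnd
    rcases List.chain_cons.1 hch with ⟨hab, hbt⟩
    by_cases hvb : r v b
    · right
      refine ⟨v :: b :: t, ?_, ?_, by simp, ?_, ?_⟩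
      · exact List.chain_cons.2 ⟨hav, List.chain_cons.2 ⟨hvb, hbt⟩⟩
      · simp [List.getLast?_cons_cons]
      · intro z; simp only [List.mem_cons]; tauto
      · have h1 : a ∉ v :: b :: t := by
          intro hmem
          rcases List.mem_cons.1 hmem with e | hmem'
          · exact hva e.symm
          · exact (List.nodup_cons.1 hnd).1 hmem'
        exact List.nodup_cons.2 ⟨h1, List.nodup_cons.2 ⟨hvm, (List.nodup_cons.1 hnd).2⟩⟩
    · have hbv : r b v := tour_total h (fun e => hvm (by simp [e.symm])) hvb
      have hvt : v ∉ t := fun hz => hvm (by simp [hz])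
      have hvbne : v ≠ b := fun e => hvm (by simp [e])
      have hnd' : (b :: t).Nodup := hnd.of_cons
      rcases ih b hbt hvt hvbne hbv hnd' with hall | ⟨m', hch', hlast', hlen', hmem', hnd''⟩
      · left; intro z hz
        rcases List.mem_cons.1 hz with rfl | hz
        · exact hbv
        · exact hall z hz
      · right
        refine ⟨b :: m', List.chain_cons.2 ⟨hab, hch'⟩, ?_, by simp [hlen'], ?_, ?_⟩
        · rw [List.getLast?_cons_cons, List.getLast?_cons_cons]
          exact hlast'
        · intro z; simp only [List.mem_cons, hmem' z]; tauto
        · have h1 : a ∉ b :: m' := by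
            intro hmem
            rcases List.mem_cons.1 hmem with e | hmem2
            · exact (List.nodup_cons.1 hnd).1 (by simp [e])
            · rcases (hmem' a).mp hmem2 with ha | ha
              · exact (List.nodup_cons.1 hnd).1 (by simp [ha])
              · exact hva ha.symm
          exact List.nodup_cons.2 ⟨h1, hnd''⟩

/-- Insert case: some element of `l` beats `v` and `v` beats some element of `l`. -/
private lemma insert_case (h : IsTournament r) {l : List V} (hcyc : IsCyc r l)
    {v : V} (hv : v ∉ l) {a : V} (ha : a ∈ l) (hav : r a v)
    {b : V} (hb : b ∈ l) (hvb : r v b) :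
    ∃ l', IsCyc r l' ∧ l.length < l'.length := by
  classical
  obtain ⟨l₁, l₂, rfl⟩ := List.append_of_mem ha
  have hrot := cyc_rot l₁ a l₂ hcyc
  set m := l₂ ++ l₁ with hm
  obtain ⟨hne, hnd, hch, hedge⟩ := hrot
  have hch' : List.Chain r a m := hch
  have hvm : v ∉ m := by
    intro hz; apply hv; simp only [hm, List.mem_append] at hz
    rcases hz with hz | hz <;> simp [hz]
  have hva : v ≠ a := fun e => hv (by simp [e])
  have hbm : b ∈ a :: m := by
    simp only [List.mem_append, List.mem_cons] at hb
    simp only [hm, List.mem_cons, List.mem_append]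
    tauto
  rcases scan h v m a hch' hvm hva hav hnd with hall | ⟨m', hch2, hlast', hlen', hmem', hnd'⟩
  · exfalso
    rcases List.mem_cons.1 hbm with rfl | hbm'
    · exact tour_asymm h hav hvb
    · exact tour_asymm h (hall b hbm') hvb
  · refine ⟨a :: m', ⟨List.cons_ne_nil a m', hnd', hch2, ?_⟩, ?_⟩
    · have hh : (a :: m').head (List.cons_ne_nil a m') = a := rfl
      have hgl : (a :: m').getLast (List.cons_ne_nil a m') = (a :: m).getLast hne := by
        have e1 := List.getLast?_eq_getLast (List.cons_ne_nil a m')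
        have e2 := List.getLast?_eq_getLast (l := a :: m) hne
        rw [e1, e2] at hlast'
        exact Option.some_injective _ hlast'
      rw [hh, hgl]
      exact hedge
    · have hml : m.length = l₂.length + l₁.length := by simp [hm]
      simp only [List.length_cons, hlen', hml, List.length_append]
      omega

/-- Main extension lemma. -/
private lemma extend (h : IsTournament r) (hsc : ∀ x y, Relation.ReflTransGen r x y)
    {l : List V} (hcyc : IsCyc r l) {v : V} (hv : v ∉ l) :
    ∃ l', IsCyc r l' ∧ l.length < l'.length := by
  classical
  obtain ⟨hne, hnd, hch, hedge⟩ := hcyc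
  by_cases hA : ∃ w, w ∉ l ∧ (∃ a ∈ l, r a w) ∧ (∃ b ∈ l, r w b)
  · obtain ⟨w, hw, ⟨a, ha, haw⟩, ⟨b, hb, hwb⟩⟩ := hA
    exact insert_case h ⟨hne, hnd, hch, hedge⟩ hw ha haw hb hwb
  · push_neg at hA
    set c := l.head hne with hc
    have hcl : c ∈ l := List.head_mem hne
    have hsplit : ∀ w, w ∉ l → (∀ a ∈ l, r a w) ∨ (∀ a ∈ l, r w a) := by
      intro w hw
      by_cases hsa : ∀ a ∈ l, r a w
      · exact Or.inl hsa
      · right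
        push_neg at hsa
        obtain ⟨a, ha, hna⟩ := hsa
        have hwa : r w a := tour_total h (fun e => hw (e ▸ ha)) hna
        have hnoin := hA w hw
        intro b hb
        by_contra hnwb
        have hbw : r b w := tour_total h (fun e => hw (e ▸ hb)) hnwb
        exact (hnoin ⟨b, hb, hbw⟩) a ha hwa
    have hSA : ∃ p, p ∉ l ∧ ∀ a ∈ l, r a p := by
      by_contra hno
      push_neg at hno
      have hclosed : ∀ a b : V, a ∈ {x | x ∈ l} → r a b → b ∈ {x | x ∈ l} := by
        intro a b ha hab
        by_contra hbl
        rcases hsplit b hbl with hsa | hsb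
        · obtain ⟨x, hx, hnx⟩ := hno b hbl
          exact hnx (hsa x hx)
        · exact tour_asymm h hab (hsb a ha)
      exact hv (closed_set _ hclosed (hsc c v) hcl)
    have hSB : ∃ q, q ∉ l ∧ ∀ a ∈ l, r q a := by
      by_contra hno
      push_neg at hno
      have hclosed : ∀ a b : V, a ∈ {x | x ∉ l} → r a b → b ∈ {x | x ∉ l} := by
        intro a b ha hab hb
        rcases hsplit a ha with hsa | hsb
        · exact tour_asymm h hab (hsa b hb)
        · obtain ⟨x, hx, hnx⟩ := hno a ha
          exact hnx (hsb x hx)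
      exact (closed_set _ hclosed (hsc v c) hv) hcl
    have hedgeAB : ∃ p q, (p ∉ l ∧ ∀ a ∈ l, r a p) ∧ (q ∉ l ∧ ∀ a ∈ l, r q a) ∧ r p q := by
      by_contra hno
      push_neg at hno
      obtain ⟨p, hpl, hpA⟩ := hSA
      have hclosed : ∀ a b : V, a ∈ {x | x ∉ l ∧ ∀ y ∈ l, r y x} → r a b →
          b ∈ {x | x ∉ l ∧ ∀ y ∈ l, r y x} := by
        intro a b ⟨hal, haA⟩ hab
        by_cases hbl : b ∈ l
        · exact absurd hab (fun hab => tour_asymm h hab (haA b hbl))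
        · rcases hsplit b hbl with hsa | hsb
          · exact ⟨hbl, hsa⟩
          · exact absurd hab (hno a b ⟨hal, haA⟩ ⟨hbl, hsb⟩)
      exact (closed_set _ hclosed (hsc p c) ⟨hpl, hpA⟩).1 hcl
    obtain ⟨p, q, ⟨hpl, hpA⟩, ⟨hql, hqB⟩, hpq⟩ := hedgeAB
    have hpqne : p ≠ q := tour_ne h hpq
    have hne2 : l ++ [p, q] ≠ [] := by simp
    refine ⟨l ++ [p, q], ⟨hne2, ?_, ?_, ?_⟩, by simp⟩
    · rw [List.nodup_append]
      refine ⟨hnd, by simp [hpqne], ?_⟩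
      intro x hx
      simp only [List.mem_cons, List.mem_singleton, List.not_mem_nil, or_false]
      rintro b (rfl | rfl) rfl
      · exact hpl hx
      · exact hql hx
    · simp only [List.Chain', List.isChain_append]
      refine ⟨hch, by simp [hpq], ?_⟩
      intro x hx y hy
      simp only [List.head?_cons, Option.mem_def, Option.some_inj] at hy
      subst hy
      rw [List.getLast?_eq_getLast hne, Option.mem_def, Option.some_inj] at hx
      subst hx
      exact hpA _ (List.getLast_mem hne)
    · have h1 : (l ++ [p, q]).getLast (by simp) = q := by
        rw [List.getLast_append]; simp
      have h2 : (l ++ [p, q]).head (by simp) = l.head hne := List.head_append_of_ne_nil hne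
      rw [h1, h2]
      exact hqB _ hcl

/-- Existence of a 3-cycle. -/
private lemma cyc3 [Fintype V] (h : IsTournament r)
    (hsc : ∀ x y, Relation.ReflTransGen r x y) (hcard : 2 ≤ Fintype.card V) :
    ∃ l : List V, IsCyc r l := by
  obtain ⟨v, w, hvw⟩ := Fintype.exists_pair_of_one_lt_card (α := V) (by omega)
  obtain ⟨o, hvo, -⟩ := (Relation.ReflTransGen.cases_head (hsc v w)).resolve_left hvw
  obtain ⟨i, -, hiv⟩ := (Relation.ReflTransGen.cases_tail (hsc w v)).resolve_left hvw
  have hOI : ∃ o' i', r v o' ∧ r o' i' ∧ r i' v := by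
    by_contra hno
    push_neg at hno
    have hclosed : ∀ a b : V, a ∈ {x | r v x} → r a b → b ∈ {x | r v x} := by
      intro a b ha hab
      by_cases hbv : b = v
      · exact absurd hab (fun hab => tour_asymm h ha (hbv ▸ hab))
      · by_contra hnvb
        have hbvv : r b v := tour_total h (Ne.symm hbv) hnvb
        exact hno a b ha hab hbvv
    exact h.1 v (closed_set _ hclosed (hsc o v) hvo)
  obtain ⟨o', i', h1, h2, h3⟩ := hOI
  refine ⟨[v, o', i'], by simp, ?_, ?_, ?_⟩
  · have e1 : v ≠ o' := tour_ne h h1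
    have e2 : o' ≠ i' := tour_ne h h2
    have e3 : i' ≠ v := tour_ne h h3
    simp [e1, e2, e3, e3.symm]
  · simp [List.Chain', List.isChain_cons_cons, h1, h2]
  · simpa using h3

private lemma grow [Fintype V] (h : IsTournament r)
    (hsc : ∀ x y, Relation.ReflTransGen r x y) :
    ∀ (m : ℕ) (l : List V), IsCyc r l → Fintype.card V ≤ l.length + m →
      ∃ l', IsCyc r l' ∧ Fintype.card V ≤ l'.length := by
  intro m
  induction m with
  | zero => intro l hl hlen; exact ⟨l, hl, by simpa using hlen⟩
  | succ m ih =>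
    intro l hl hlen
    by_cases hfull : Fintype.card V ≤ l.length
    · exact ⟨l, hl, hfull⟩
    · push_neg at hfull
      have : ∃ v, v ∉ l := by
        by_contra hno
        push_neg at hno
        classical
        have : Fintype.card V ≤ l.length := by
          have h1 : (Finset.univ : Finset V).card ≤ l.toFinset.card :=
            Finset.card_le_card (fun x _ => List.mem_toFinset.2 (hno x))
          calc Fintype.card V ≤ l.toFinset.card := h1
            _ ≤ l.length := l.toFinset_card_le
        omega
      obtain ⟨v, hv⟩ := this
      obtain ⟨l', hl', hlt⟩ := extend h hsc hl hv
      exact ih l' hl' (by omega)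

end Camion

theorem stmt_6 {V : Type*} [Fintype V] (r : V → V → Prop)
    (h : IsTournament r) (hcard : 2 ≤ Fintype.card V) :
    (∀ x y, Relation.ReflTransGen r x y) ↔
      ∃ (l : List V) (hne : l ≠ []), l.Nodup ∧ (∀ v, v ∈ l) ∧ l.Chain' r ∧
        r (l.getLast hne) (l.head hne) := by
  constructor
  · intro hsc
    obtain ⟨l₀, hl₀⟩ := cyc3 h hsc hcard
    obtain ⟨l, ⟨hne, hnd, hch, hedge⟩, hlen⟩ :=
      grow h hsc (Fintype.card V) l₀ hl₀ (by omega)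
    refine ⟨l, hne, hnd, ?_, hch, hedge⟩
    intro v
    classical
    have hcardeq : l.toFinset.card = Fintype.card V := by
      have h1 : l.toFinset.card = l.length := List.toFinset_card_of_nodup hnd
      have h2 : l.length ≤ Fintype.card V := hnd.length_le_card
      omega
    have : l.toFinset = Finset.univ := Finset.eq_univ_of_card _ hcardeq
    have hv : v ∈ l.toFinset := this ▸ Finset.mem_univ v
    exact List.mem_toFinset.1 hv
  · rintro ⟨l, hne, hnd, hall, hch, hedge⟩ x y
    have hx : Relation.ReflTransGen r x (l.getLast hne) := reach_getLast l hne hch x (hall x)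
    have hh : Relation.ReflTransGen r (l.head hne) y := by
      rcases l with _ | ⟨a, t⟩
      · exact absurd rfl hne
      · rcases List.mem_cons.1 (hall y) with rfl | hy
        · exact Relation.ReflTransGen.refl
        · exact chain_reach t a hch y hy
    exact (hx.tail hedge).trans hh
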